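/- arXiv:2012.07839 — 3 statements merged into one kernel-verified Lean document; each statement's English description precedes it below -/
import Mathlib

section
/- Let ν ∈ ℕ₀, n ∈ L_ν, let I_1 := {i ∈ {1,...,ν} : c^{i-1}(n) is odd} and κ := |I_1|. Then, as an identity of rational numbers, n = (2^{ν-κ}/3^κ) · ∏_{i ∈ I_1} (c^i(n) - 1)/c^i(n). -/
/-- The Collatz function (on ℕ; positive integers are preserved). -/
def c (n : ℕ) : ℕ := if Even n then n / 2 else 3 * n + 1

/-- The level set `L ν`: positive integers whose Collatz orbit first reaches 1 after exactly ν steps. -/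
def L (ν : ℕ) : Set ℕ := {n | 0 < n ∧ c^[ν] n = 1 ∧ ∀ i < ν, c^[i] n ≠ 1}

/-- Telescoping product identity along the Collatz orbit. -/
lemma collatz_key (ν : ℕ) : ∀ n : ℕ, c^[ν] n = 1 →
    (n : ℚ) = ∏ i ∈ Finset.range ν,
      (if Odd (c^[i] n) then ((c^[i+1] n : ℚ) - 1) / (3 * (c^[i+1] n : ℚ)) else 2) := by
  induction ν with
  | zero => intro n h; simpa using congrArg (Nat.cast : ℕ → ℚ) h
  | succ ν ih =>
    intro n h
    have h' : c^[ν] (c n) = 1 := by rwa [Function.iterate_succ_apply] at h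
    have step : (n : ℚ)
        = (if Odd n then ((c n : ℚ) - 1) / (3 * (c n : ℚ)) else 2) * (c n : ℚ) := by
      by_cases hn : Odd n
      · have hc : c n = 3 * n + 1 := by simp [c, Nat.not_even_iff_odd.2 hn]
        rw [if_pos hn, hc]
        push_cast
        have : (3 : ℚ) * n + 1 ≠ 0 := by positivity
        field_simp
        ring
      · have he : Even n := Nat.not_odd_iff_even.mp hn
        have hc : c n = n / 2 := by simp [c, he]
        rw [if_neg hn, hc]
        obtain ⟨k, hk⟩ := he
        subst hk
        have : (k + k) / 2 = k := by omega
        rw [this]; push_cast; ring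
    rw [Finset.prod_range_succ']
    have heq : ∀ i ∈ Finset.range ν,
        (if Odd (c^[i+1] n) then ((c^[i+1+1] n : ℚ) - 1) / (3 * (c^[i+1+1] n : ℚ)) else 2)
        = (if Odd (c^[i] (c n)) then ((c^[i+1] (c n) : ℚ) - 1) / (3 * (c^[i+1] (c n) : ℚ)) else 2) := by
      intro i _
      simp [Function.iterate_succ_apply]
      rfl
    rw [Finset.prod_congr rfl heq, ← ih (c n) h', mul_comm]
    simpa using step

/-- for `n ∈ L ν`, with `I₁` the set of odd-step indices and `κ = |I₁|`,
`n = (2^{ν-κ}/3^κ) · ∏_{i ∈ I₁} (c^i(n) - 1)/c^i(n)` as rational numbers. -/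
theorem stmt_10 (ν : ℕ) (n : ℕ) (hn : n ∈ L ν)
    (I₁ : Finset ℕ) (hI₁ : I₁ = (Finset.Icc 1 ν).filter fun i => Odd (c^[i - 1] n))
    (κ : ℕ) (hκ : κ = I₁.card) :
    (n : ℚ) = 2 ^ (ν - κ) / 3 ^ κ * ∏ i ∈ I₁, ((c^[i] n : ℚ) - 1) / (c^[i] n : ℚ) := by
  obtain ⟨hpos, h1, -⟩ := hn
  have hk := collatz_key ν n h1
  have hIcc : (n : ℚ) = ∏ i ∈ Finset.Icc 1 ν,
      (if Odd (c^[i-1] n) then ((c^[i] n : ℚ) - 1) / (3 * (c^[i] n : ℚ)) else 2) := by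
    rw [← Finset.Ico_add_one_right_eq_Icc, Finset.prod_Ico_eq_prod_range]
    rw [hk]
    refine Finset.prod_congr rfl fun i _ => ?_
    have e1 : 1 + i - 1 = i := by omega
    have e2 : 1 + i = i + 1 := by omega
    rw [e1, e2]
  rw [← Finset.prod_filter_mul_prod_filter_not (Finset.Icc 1 ν)
      (fun i => Odd (c^[i-1] n))] at hIcc
  rw [Finset.prod_ite_of_true, Finset.prod_ite_of_false] at hIcc
  · rw [Finset.prod_const] at hIcc
    have hc2 : I₁.card + ((Finset.Icc 1 ν).filter fun i => ¬ Odd (c^[i-1] n)).card = ν := by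
      have := Finset.card_filter_add_card_filter_not
        (s := Finset.Icc 1 ν) (p := fun i => Odd (c^[i-1] n))
      rw [← hI₁, Nat.card_Icc] at this
      omega
    have hcard : ((Finset.Icc 1 ν).filter fun i => ¬ Odd (c^[i-1] n)).card = ν - κ := by
      omega
    have hsplit : ∀ i ∈ I₁, ((c^[i] n : ℚ) - 1) / (3 * (c^[i] n : ℚ))
        = (1/3) * (((c^[i] n : ℚ) - 1) / (c^[i] n : ℚ)) := by
      intro i _
      rcases eq_or_ne ((c^[i] n : ℚ)) 0 with h0 | h0
      · simp [h0]
      · field_simp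
    rw [hcard, ← hI₁, Finset.prod_congr rfl hsplit, Finset.prod_mul_distrib,
      Finset.prod_const, ← hκ] at hIcc
    rw [hIcc, one_div, inv_pow, div_eq_mul_inv]
    ring
  · intro i hi; exact (Finset.mem_filter.mp hi).2
  · intro i hi; exact (Finset.mem_filter.mp hi).2
end

section
/- Let ν ∈ ℕ₀, n ∈ L_ν, and let κ := |{i ∈ {1,...,ν} : c^{i-1}(n) is odd}|. Then 6^κ · n ≤ 2^ν, i.e., n ≤ 2^ν/6^κ. -/
def K (ν n : ℕ) : ℕ := ∑ i ∈ Finset.range ν, if Odd (c^[i] n) then 1 else 0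

lemma c_pos {n : ℕ} (h : 0 < n) : 0 < c n := by
  unfold c
  split_ifs with he
  · obtain ⟨k, rfl⟩ := he
    omega
  · omega

lemma K_succ (ν n : ℕ) : K (ν + 1) n = K ν (c n) + (if Odd n then 1 else 0) := by
  unfold K
  rw [Finset.sum_range_succ']
  simp [Function.iterate_succ_apply]
  rw [Finset.card_filter]
  congr 1

lemma main_lem : ∀ ν n, 0 < n → c^[ν] n = 1 → 6 ^ (K ν n) * n ≤ 2 ^ ν := by
  intro ν
  induction ν with
  | zero => intro n hn h; simp at h; simp [K, h]
  | succ ν ih =>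
    intro n hn h
    rw [Function.iterate_succ_apply] at h
    have ih' := ih (c n) (c_pos hn) h
    rw [K_succ]
    by_cases ho : Odd n
    · have hc : c n = 3 * n + 1 := by simp [c, Nat.not_even_iff_odd.mpr ho]
      rw [hc] at ih'
      simp only [ho, if_pos]
      calc 6 ^ (K ν (c n) + 1) * n = 2 * (6 ^ (K ν (c n)) * (3 * n)) := by ring
        _ ≤ 2 * (6 ^ (K ν (c n)) * (3 * n + 1)) := by
            apply Nat.mul_le_mul_left; apply Nat.mul_le_mul_left; omega
        _ ≤ 2 * 2 ^ ν := by rw [hc]; exact Nat.mul_le_mul_left _ ih'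
        _ = 2 ^ (ν + 1) := by ring
    · have he : Even n := Nat.not_odd_iff_even.mp ho
      obtain ⟨m, hm⟩ := he
      have hc : c n = m := by rw [c, if_pos ⟨m, hm⟩]; omega
      rw [hc] at ih'
      simp only [ho, if_neg, not_false_iff, add_zero, hc]
      calc 6 ^ (K ν m) * n = 2 * (6 ^ (K ν m) * m) := by rw [hm]; ring
        _ ≤ 2 * 2 ^ ν := Nat.mul_le_mul_left _ ih'
        _ = 2 ^ (ν + 1) := by ring

lemma card_eq (ν n : ℕ) :
    ((Finset.Icc 1 ν).filter fun i => Odd (c^[i - 1] n)).card = K ν n := by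
  unfold K
  rw [← Finset.card_filter]
  apply Finset.card_bij (fun i _ => i - 1)
  · intro a ha
    simp only [Finset.mem_filter, Finset.mem_Icc] at ha
    simp only [Finset.mem_filter, Finset.mem_range]
    exact ⟨by omega, ha.2⟩
  · intro a ha b hb hab
    simp only [Finset.mem_filter, Finset.mem_Icc] at ha hb
    omega
  · intro b hb
    simp only [Finset.mem_filter, Finset.mem_range] at hb
    exact ⟨b + 1, by simp only [Finset.mem_filter, Finset.mem_Icc]; simpa using hb, by omega⟩

/-- for `n ∈ L ν` with `κ` the number of odd steps, `6^κ · n ≤ 2^ν`. -/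
theorem stmt_11 (ν : ℕ) (n : ℕ) (hn : n ∈ L ν)
    (κ : ℕ) (hκ : κ = ((Finset.Icc 1 ν).filter fun i => Odd (c^[i - 1] n)).card) :
    6 ^ κ * n ≤ 2 ^ ν := by
  obtain ⟨hpos, h1, -⟩ := hn
  rw [hκ, card_eq]
  exact main_lem ν n hpos h1
end

section
/- Let ν ∈ ℕ₀, n ∈ L_ν, and let I_1 := {i ∈ {1,...,ν} : c^{i-1}(n) is odd}. Then the map i ↦ c^i(n) is injective on I_1, its image is contained in the set {k ∈ R(n) : k ≡ 4 (mod 6)} (which is finite), and consequently ∏_{i ∈ I_1} (c^i(n) - 1)/c^i(n) ≥ σ(n), where σ(n) := ∏_{k ∈ R(n), k ≡ 4 (mod 6)} (k-1)/k. -/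
def R (n : ℕ) : Set ℕ := {k | ∃ i : ℕ, c^[i] n = k}

noncomputable def σ (n : ℕ) : ℝ := ∏ᶠ k ∈ {k ∈ R n | k % 6 = 4}, ((k : ℝ) - 1) / k

def 𝔠 : Set ℕ := ⋃ ν : ℕ, L ν

noncomputable def σ₀ : ℝ := sInf (σ '' 𝔠)

noncomputable def S (ν κ : ℕ) : Set ℝ := Set.Icc (σ₀ * 2 ^ ν / 6 ^ κ) (2 ^ ν / 6 ^ κ)

lemma c_three_one : c^[3] 1 = 1 := by decide

lemma c_mul_three (j : ℕ) : c^[3 * j] 1 = 1 := by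
  induction j with
  | zero => rfl
  | succ k ih =>
    rw [Nat.mul_succ, Function.iterate_add_apply, c_three_one, ih]

lemma c_mod_three (j : ℕ) : c^[j] 1 = c^[j % 3] 1 := by
  conv_lhs => rw [← Nat.mod_add_div j 3, Function.iterate_add_apply, c_mul_three]

/-- for `n ∈ L ν` and `I₁` the set of odd-step indices, `i ↦ c^i(n)` is
injective on `I₁`, its image lies in the finite set `{k ∈ R n : k ≡ 4 (mod 6)}`, and
`∏_{i ∈ I₁} (c^i(n) - 1)/c^i(n) ≥ σ(n)`. -/
theorem stmt_14 (ν : ℕ) (n : ℕ) (hn : n ∈ L ν)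
    (I₁ : Finset ℕ) (hI₁ : I₁ = (Finset.Icc 1 ν).filter fun i => Odd (c^[i - 1] n)) :
    Set.InjOn (fun i => c^[i] n) ↑I₁ ∧
    (∀ i ∈ I₁, c^[i] n ∈ {k ∈ R n | k % 6 = 4}) ∧
    {k ∈ R n | k % 6 = 4}.Finite ∧
    σ n ≤ ∏ i ∈ I₁, ((c^[i] n : ℝ) - 1) / (c^[i] n : ℝ) := by
  obtain ⟨hn0, hν, hmin⟩ := hn
  -- injectivity on all of [0, ν]
  have key : ∀ i ≤ ν, ∀ j ≤ ν, c^[i] n = c^[j] n → i = j := by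
    have aux : ∀ i j, i ≤ ν → j ≤ ν → i < j → c^[i] n ≠ c^[j] n := by
      intro i j hi hj hij heq
      apply hmin (ν - j + i) (by omega)
      have : c^[ν - j + i] n = c^[ν - j] (c^[i] n) := Function.iterate_add_apply c _ i n
      rw [this, heq, ← Function.iterate_add_apply, Nat.sub_add_cancel hj] at *
      exact hν ▸ this
    intro i hi j hj heq
    rcases lt_trichotomy i j with h | h | h
    · exact absurd heq (aux i j hi hj h)
    · exact h
    · exact absurd heq.symm (aux j i hj hi h)
  have hmem : ∀ i ∈ I₁, c^[i] n ∈ {k ∈ R n | k % 6 = 4} := by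
    intro i hi
    rw [hI₁, Finset.mem_filter, Finset.mem_Icc] at hi
    obtain ⟨⟨h1, h2⟩, hodd⟩ := hi
    refine ⟨⟨i, rfl⟩, ?_⟩
    have : c^[i] n = c (c^[i-1] n) := by
      conv_lhs => rw [show i = (i-1) + 1 by omega]
      exact Function.iterate_succ_apply' c _ n
    have ho := Nat.odd_iff.mp hodd
    rw [this, c, if_neg (Nat.even_iff.not.mpr (by omega))]
    omega
  have hinj : Set.InjOn (fun i => c^[i] n) ↑I₁ := by
    intro i hi j hj heq
    have hi' : i ≤ ν := by
      rw [hI₁] at hi; simp only [Finset.coe_filter, Set.mem_setOf_eq, Finset.mem_Icc] at hi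
      exact hi.1.2
    have hj' : j ≤ ν := by
      rw [hI₁] at hj; simp only [Finset.coe_filter, Set.mem_setOf_eq, Finset.mem_Icc] at hj
      exact hj.1.2
    exact key i hi' j hj' heq
  -- finiteness
  have hRsub : R n ⊆ ↑((Finset.range (ν + 3)).image fun i => c^[i] n) := by
    intro k hk
    obtain ⟨i, hik⟩ := hk
    simp only [Finset.coe_image, Finset.coe_range, Set.mem_image, Set.mem_Iio]
    by_cases h : i < ν + 3
    · exact ⟨i, h, hik⟩
    · refine ⟨ν + (i - ν) % 3, by omega, ?_⟩
      rw [show ν + (i - ν) % 3 = (i - ν) % 3 + ν by omega, Function.iterate_add_apply, hν,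
        ← c_mod_three, ← hν, ← Function.iterate_add_apply, Nat.sub_add_cancel (by omega)]
      exact hik
  have hfin : {k ∈ R n | k % 6 = 4}.Finite :=
    Set.Finite.subset (Set.Finite.subset (Finset.finite_toSet _) hRsub) (fun k hk => hk.1)
  refine ⟨hinj, hmem, hfin, ?_⟩
  -- product inequality
  set f : ℕ → ℝ := fun k => ((k : ℝ) - 1) / k with hf
  have hσ : σ n = ∏ k ∈ hfin.toFinset, f k := by
    rw [σ, finprod_mem_eq_finite_toFinset_prod _ hfin]
  have hT : I₁.image (fun i => c^[i] n) ⊆ hfin.toFinset := by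
    intro k hk
    obtain ⟨i, hi, rfl⟩ := Finset.mem_image.mp hk
    exact hfin.mem_toFinset.mpr (hmem i hi)
  have hprodT : ∏ i ∈ I₁, f (c^[i] n) = ∏ k ∈ I₁.image (fun i => c^[i] n), f k :=
    (Finset.prod_image (fun i hi j hj => hinj hi hj)).symm
  have hbound : ∀ k ∈ hfin.toFinset, 0 ≤ f k ∧ f k ≤ 1 := by
    intro k hk
    have hk4 : k % 6 = 4 := (hfin.mem_toFinset.mp hk).2
    have hk1 : (1 : ℝ) ≤ (k : ℝ) := by exact_mod_cast Nat.one_le_iff_ne_zero.mpr (by omega)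
    constructor
    · exact div_nonneg (by linarith) (by linarith)
    · rw [div_le_one (by linarith)]; linarith
  rw [hσ, ← Finset.prod_sdiff hT]
  calc (∏ k ∈ hfin.toFinset \ I₁.image (fun i => c^[i] n), f k) *
        ∏ k ∈ I₁.image (fun i => c^[i] n), f k
      ≤ 1 * ∏ k ∈ I₁.image (fun i => c^[i] n), f k := by
        apply mul_le_mul_of_nonneg_right
        · apply Finset.prod_le_one
          · intro k hk; exact (hbound k (Finset.mem_sdiff.mp hk).1).1
          · intro k hk; exact (hbound k (Finset.mem_sdiff.mp hk).1).2
        · exact Finset.prod_nonneg fun k hk => (hbound k (hT hk)).1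
    _ = ∏ i ∈ I₁, f (c^[i] n) := by rw [one_mul, hprodT]
    _ = ∏ i ∈ I₁, ((c^[i] n : ℝ) - 1) / (c^[i] n : ℝ) := rfl
end
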